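/- All bridgeless planar maps are 4-face-colorable if and only if all bridgeless planar cubic maps are 4-face-colorable. -/

import Mathlib

/-- A (finite, oriented) combinatorial map: a finite set of darts `D`, the
rotation `σ` giving the cyclic order of darts around each vertex, and the
fixed-point-free involution `α` exchanging the two darts of each edge.
Vertices are the cycles of `σ`, edges the cycles of `α`, and faces the cycles
of `σ * α`. -/
structure CombMap where
  D : Type
  [fintypeD : Fintype D]
  σ : Equiv.Perm D
  α : Equiv.Perm D
  α_invol : ∀ d, α (α d) = d
  α_ne : ∀ d, α d ≠ d

attribute [instance] CombMap.fintypeD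

/-- The setoid on darts whose classes are the cycles of a permutation. -/
def permSetoid {D : Type*} (f : Equiv.Perm D) : Setoid D :=
  ⟨f.SameCycle, ⟨fun _ => Equiv.Perm.SameCycle.refl f _,
    fun h => h.symm, fun h h' => h.trans h'⟩⟩

/-- The number of cycles (orbits) of a permutation. -/
noncomputable def numCycles {D : Type*} (f : Equiv.Perm D) : ℕ :=
  Nat.card (Quotient (permSetoid f))

namespace CombMap

variable (M : CombMap)

/-- The face permutation of a combinatorial map. -/
def φ : Equiv.Perm M.D := M.σ * M.α

/-- A combinatorial map is connected if any dart can be reached from any other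
using `σ` and `α`. -/
def Connected : Prop :=
  ∀ a b : M.D, Relation.EqvGen (fun x y => y = M.σ x ∨ y = M.α x) a b

/-- A combinatorial map is planar if it is connected and satisfies the Euler
relation `#vertices - #edges + #faces = 2` (genus 0). -/
def Planar : Prop :=
  M.Connected ∧ numCycles M.σ + numCycles M.φ = numCycles M.α + 2

/-- A combinatorial map is cubic if every vertex has exactly three darts. -/
def Cubic : Prop := ∀ d, M.σ (M.σ (M.σ d)) = d ∧ M.σ d ≠ d

/-- A connected plane map is bridgeless iff no edge has the same face on both
of its sides. -/
def Bridgeless : Prop := ∀ d, ¬ M.φ.SameCycle d (M.α d)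

/-- A proper face coloring with colors in `C`: a function on darts that is
constant on faces (cycles of `φ`) and takes different values on the two sides
of every edge. -/
def ProperFaceColoring {C : Type*} (Φ : M.D → C) : Prop :=
  (∀ d, Φ (M.φ d) = Φ d) ∧ ∀ d, Φ d ≠ Φ (M.α d)

/-- A map is 4-face-colorable if its faces admit a proper coloring by 4
colors. -/
def FourColorable : Prop := ∃ Φ : M.D → Fin 4, M.ProperFaceColoring Φ

/-- A set of darts closed under `α`, i.e. a set of edges. -/
def EdgeSet (S : Set M.D) : Prop := ∀ d, d ∈ S ↔ M.α d ∈ S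

/-- The darts at the same vertex as `d`. -/
def vertexDarts (d : M.D) : Set M.D := {e | M.σ.SameCycle d e}

/-- A 2-factor: a set of edges such that every vertex is incident to exactly
two of its darts. -/
def IsTwoFactorSet (S : Set M.D) : Prop :=
  M.EdgeSet S ∧ ∀ d, (M.vertexDarts d ∩ S).ncard = 2

/-- A weak Hamiltonian: a 2-factor all of whose cycles have even length,
i.e. the 2-factor admits a proper 2-coloring of its vertices (a union of
disjoint cycles is bipartite iff all its cycles are even). -/
def IsWeakHamSet (S : Set M.D) : Prop :=
  M.IsTwoFactorSet S ∧
  ∃ c : M.D → Bool, (∀ d, c (M.σ d) = c d) ∧ ∀ d ∈ S, c (M.α d) ≠ c d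

/-- A perfect matching contained in `S`: a set of edges of `S` with exactly
one dart at each vertex (on the cycles of a 2-factor `S`, this is a choice of
alternating edges on each cycle). -/
def IsMatchingSet (S F : Set M.D) : Prop :=
  F ⊆ S ∧ M.EdgeSet F ∧ ∀ d, (M.vertexDarts d ∩ F).ncard = 1

/-- `S'` is a mutation of the weak Hamiltonian `S`: the union of the
complementary perfect matching `Sᶜ` with a perfect matching chosen on the
cycles of `S`. -/
def MutationSet (S S' : Set M.D) : Prop :=
  ∃ F : Set M.D, M.IsMatchingSet S F ∧ S' = Sᶜ ∪ F

end CombMap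

section Resolution

/-- A function constant along `f` is constant along all integer powers of `f`. -/
lemma const_zpow {D T : Type*} (f : Equiv.Perm D) (g : D → T)
    (hg : ∀ x, g (f x) = g x) : ∀ (n : ℤ) (x : D), g ((f ^ n) x) = g x := by
  have hinv : ∀ x, g (f⁻¹ x) = g x := fun x => by
    conv_rhs => rw [← show f (f⁻¹ x) = x by simp]
    exact (hg _).symm
  intro n
  induction n using Int.induction_on with
  | zero => simp
  | succ n ih =>
      intro x
      rw [zpow_add_one, Equiv.Perm.mul_apply, ih, hg]
  | pred n ih =>
      intro x
      rw [sub_eq_add_neg, zpow_add, Equiv.Perm.mul_apply]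
      rw [show ((f : Equiv.Perm D) ^ (-1 : ℤ)) x = f⁻¹ x by simp, ih, hinv]

lemma sameCycle_const {D T : Type*} (f : Equiv.Perm D) (g : D → T)
    (hg : ∀ x, g (f x) = g x) {a b : D} (h : f.SameCycle a b) : g a = g b := by
  obtain ⟨n, hn⟩ := h
  rw [← hn, const_zpow f g hg]

lemma quot_eq_of_sameCycle {D : Type*} (f : Equiv.Perm D) {a b : D} (h : f.SameCycle a b) :
    Quotient.mk (permSetoid f) a = Quotient.mk (permSetoid f) b := Quotient.sound h

lemma not_sameCycle {D T : Type*} (f : Equiv.Perm D) (g : D → T)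
    (hg : ∀ x, g (f x) = g x) {a b : D} (h : g a ≠ g b) : ¬ f.SameCycle a b :=
  fun hs => h (sameCycle_const f g hg hs)

namespace CombMap

variable (M : CombMap)

/-- The involution of the resolution of a map. -/
def resA : M.D × Fin 3 → M.D × Fin 3 := fun x =>
  if x.2 = 0 then (M.α x.1, 0) else if x.2 = 1 then (M.σ x.1, 2) else (M.σ.symm x.1, 1)

lemma resA_invol : ∀ x, M.resA (M.resA x) = x := by
  rintro ⟨d, i⟩
  fin_cases i <;> simp [resA, M.α_invol]

/-- The resolution of a map: every vertex is blown up into a small cycle,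
giving a cubic map. -/
def res : CombMap where
  D := M.D × Fin 3
  σ := Equiv.prodCongr (Equiv.refl M.D) (finRotate 3)
  α := ⟨M.resA, M.resA, M.resA_invol, M.resA_invol⟩
  α_invol := M.resA_invol
  α_ne := by
    rintro ⟨d, i⟩ h
    fin_cases i <;> simp [resA] at h
    exact M.α_ne d h

@[simp] lemma res_σ_apply (d : M.D) (i : Fin 3) : M.res.σ (d, i) = (d, i + 1) := by
  exact Prod.ext rfl (finRotate_succ_apply i)

@[simp] lemma res_α_zero (d : M.D) : M.res.α (d, 0) = (M.α d, 0) := rfl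
@[simp] lemma res_α_one (d : M.D) : M.res.α (d, 1) = (M.σ d, 2) := rfl
@[simp] lemma res_α_two (d : M.D) : M.res.α (d, 2) = (M.σ.symm d, 1) := rfl

@[simp] lemma res_φ_zero (d : M.D) : M.res.φ (d, 0) = (M.α d, 1) := by
  show M.res.σ (M.res.α (d, 0)) = _; rw [res_α_zero, res_σ_apply]; rfl
@[simp] lemma res_φ_one (d : M.D) : M.res.φ (d, 1) = (M.σ d, 0) := by
  show M.res.σ (M.res.α (d, 1)) = _; rw [res_α_one, res_σ_apply]; rfl
@[simp] lemma res_φ_two (d : M.D) : M.res.φ (d, 2) = (M.σ.symm d, 2) := by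
  show M.res.σ (M.res.α (d, 2)) = _; rw [res_α_two, res_σ_apply]; rfl

lemma res_cubic : M.res.Cubic := by
  rintro ⟨d, i⟩
  constructor
  · simp only [res_σ_apply]
    have : i + 1 + 1 + 1 = i := by fin_cases i <;> decide
    rw [this]
  · simp only [res_σ_apply, ne_eq]
    intro h
    have hne : ∀ j : Fin 3, j + 1 ≠ j := by decide
    exact absurd (congrArg Prod.snd h) (hne i)

lemma res_connected (h : M.Connected) : M.res.Connected := by
  set r : M.res.D → M.res.D → Prop := fun x y => y = M.res.σ x ∨ y = M.res.α x with hr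
  have step1 : ∀ d : M.D, ∀ i : Fin 3, Relation.EqvGen r (d, i) (d, i + 1) :=
    fun d i => Relation.EqvGen.rel _ _ (Or.inl (by simp; rfl))
  have hup : ∀ (d : M.D) (i : Fin 3), Relation.EqvGen r (d, 0) (d, i) := by
    intro d i
    fin_cases i
    · exact Relation.EqvGen.refl _
    · exact step1 d 0
    · exact (step1 d 0).trans _ _ _ (step1 d 1)
  have key : ∀ a b : M.D, Relation.EqvGen r (a, (0 : Fin 3)) (b, (0 : Fin 3)) := by
    intro a b
    induction h a b with
    | rel x y hxy =>
        rcases hxy with h1 | h1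
        · subst h1
          refine ((step1 x 0).trans _ _ _ ?_)
          refine (Relation.EqvGen.rel ((x, 1) : M.res.D) ((M.σ x, 2) : M.res.D)
            (Or.inr (M.res_α_one x).symm)).trans _ _ _ ?_
          refine Relation.EqvGen.rel _ _ (Or.inl ?_)
          rw [res_σ_apply, show (2 : Fin 3) + 1 = 0 by decide]
        · subst h1
          exact Relation.EqvGen.rel _ _ (Or.inr (M.res_α_zero x).symm)
    | refl x => exact Relation.EqvGen.refl _
    | symm x y _ ih => exact ih.symm _ _
    | trans x y z _ _ ih1 ih2 => exact ih1.trans _ _ _ ih2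
  rintro ⟨a, i⟩ ⟨b, j⟩
  exact (((hup a i).symm _ _).trans _ _ _ (key a b)).trans _ _ _ (hup b j)

lemma res_bridgeless (hB : M.Bridgeless) : M.res.Bridgeless := by
  classical
  -- invariant function on φ-orbits of the resolution
  set g : M.res.D → Option (Quotient (permSetoid M.φ)) := fun x =>
    if x.2 = 0 then some (Quotient.mk (permSetoid M.φ) x.1)
    else if x.2 = 1 then some (Quotient.mk (permSetoid M.φ) (M.α x.1))
    else none with hgdef
  have hg : ∀ x, g (M.res.φ x) = g x := by
    rintro ⟨d, i⟩
    fin_cases i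
    · simp [hgdef, M.α_invol]
    · simp only [res_φ_one, hgdef]
      norm_num
      exact Quotient.sound (show M.φ.SameCycle (M.α d) (M.σ d) from
        ⟨1, by simp [φ, Equiv.Perm.mul_apply, M.α_invol]⟩).symm
    · simp [hgdef]
  rintro ⟨d, i⟩
  fin_cases i
  · refine not_sameCycle _ g hg ?_
    simp only [res_α_zero, hgdef]
    norm_num
    intro hq
    exact hB d (Quotient.exact hq)
  · refine not_sameCycle _ g hg ?_
    simp [hgdef]
  · refine not_sameCycle _ g hg ?_
    simp [hgdef]

end CombMap

end Resolution

section Euler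

lemma sameCycle_apply {D : Type*} (f : Equiv.Perm D) (x : D) : f.SameCycle x (f x) :=
  ⟨1, by simp⟩

namespace CombMap

variable (M : CombMap)

lemma res_α_sc (d : M.D) : M.res.α.SameCycle (M.α d, 0) (d, 0) :=
  ⟨1, by simp [M.α_invol]; rfl⟩

/-- Vertices of the resolution correspond to darts of `M`. -/
noncomputable def resVEquiv : Quotient (permSetoid M.res.σ) ≃ M.D where
  toFun := Quotient.lift (fun x => x.1) (fun a b h =>
    sameCycle_const M.res.σ Prod.fst (by rintro ⟨d, i⟩; simp) h)
  invFun := fun d => Quotient.mk _ (d, 0)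
  left_inv := by
    refine Quotient.ind ?_
    rintro ⟨d, i⟩
    refine Quotient.sound (?_ : M.res.σ.SameCycle (d, 0) (d, i))
    have e1 : M.res.σ (d, 0) = (d, 1) := by
      rw [res_σ_apply, show (0 : Fin 3) + 1 = 1 by decide]
    have e2 : M.res.σ (d, 1) = (d, 2) := by
      rw [res_σ_apply, show (1 : Fin 3) + 1 = 2 by decide]
    fin_cases i
    · exact Equiv.Perm.SameCycle.refl _ _
    · exact e1 ▸ sameCycle_apply M.res.σ (d, 0)
    · exact ((e1 ▸ sameCycle_apply M.res.σ (d, 0)).trans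
        (e2 ▸ sameCycle_apply M.res.σ (d, 1)))
  right_inv := fun d => rfl

/-- Classifying function for edges of the resolution. -/
def resEfun : M.D × Fin 3 → (Quotient (permSetoid M.α)) ⊕ M.D := fun x =>
  if x.2 = 0 then Sum.inl (Quotient.mk (permSetoid M.α) x.1)
  else if x.2 = 1 then Sum.inr x.1 else Sum.inr (M.σ.symm x.1)

lemma resEfun_const : ∀ x, M.resEfun (M.res.α x) = M.resEfun x := by
  rintro ⟨d, i⟩
  fin_cases i
  · show M.resEfun (M.res.α (d, 0)) = M.resEfun (d, 0)
    rw [res_α_zero]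
    simp only [resEfun]
    norm_num
    exact Quotient.sound (⟨1, by simp [M.α_invol]⟩ : M.α.SameCycle (M.α d) d)
  · show M.resEfun (M.res.α (d, 1)) = M.resEfun (d, 1)
    rw [res_α_one]; simp [resEfun]
  · show M.resEfun (M.res.α (d, 2)) = M.resEfun (d, 2)
    rw [res_α_two]; simp [resEfun]

lemma resE_back_const : ∀ d : M.D,
    Quotient.mk (permSetoid M.res.α) (M.α d, (0 : Fin 3)) =
      Quotient.mk (permSetoid M.res.α) (d, (0 : Fin 3)) :=
  fun d => quot_eq_of_sameCycle M.res.α (M.res_α_sc d)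

/-- Edges of the resolution: original edges plus one new edge per dart. -/
noncomputable def resEEquiv :
    Quotient (permSetoid M.res.α) ≃ (Quotient (permSetoid M.α)) ⊕ M.D where
  toFun := Quotient.lift M.resEfun
    (fun _ _ h => sameCycle_const M.res.α M.resEfun M.resEfun_const h)
  invFun := Sum.elim
    (Quotient.lift (fun d => Quotient.mk (permSetoid M.res.α) (d, 0))
      (fun _ _ h => sameCycle_const M.α
        (fun d => Quotient.mk (permSetoid M.res.α) (d, 0)) M.resE_back_const h))
    (fun d => Quotient.mk (permSetoid M.res.α) (d, 1))
  left_inv := by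
    refine Quotient.ind ?_
    rintro ⟨d, i⟩
    fin_cases i
    · rfl
    · rfl
    · show Quotient.mk (permSetoid M.res.α) (M.σ.symm d, 1) = _
      exact quot_eq_of_sameCycle M.res.α
        (⟨1, by simp; rfl⟩ : M.res.α.SameCycle (M.σ.symm d, 1) (d, 2))
  right_inv := by
    rintro (q | d)
    · induction q using Quotient.ind with
      | _ d => rfl
    · rfl

lemma res_φ_sc0 (d : M.D) : M.res.φ.SameCycle (d, 0) (M.φ d, 0) := by
  have e1 : M.res.φ (d, 0) = (M.α d, 1) := res_φ_zero M d
  have e2 : M.res.φ (M.α d, 1) = (M.φ d, 0) := by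
    rw [res_φ_one]; rfl
  exact (e1 ▸ sameCycle_apply M.res.φ (d, 0)).trans
    (e2 ▸ sameCycle_apply M.res.φ (M.α d, 1))

/-- Classifying function for faces of the resolution. -/
def resFfun : M.D × Fin 3 → (Quotient (permSetoid M.φ)) ⊕ (Quotient (permSetoid M.σ)) :=
  fun x =>
    if x.2 = 0 then Sum.inl (Quotient.mk (permSetoid M.φ) x.1)
    else if x.2 = 1 then Sum.inl (Quotient.mk (permSetoid M.φ) (M.α x.1))
    else Sum.inr (Quotient.mk (permSetoid M.σ) x.1)

lemma resFfun_const : ∀ x, M.resFfun (M.res.φ x) = M.resFfun x := by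
  rintro ⟨d, i⟩
  fin_cases i
  · show M.resFfun (M.res.φ (d, 0)) = M.resFfun (d, 0)
    rw [res_φ_zero]
    simp [resFfun, M.α_invol]
  · show M.resFfun (M.res.φ (d, 1)) = M.resFfun (d, 1)
    rw [res_φ_one]
    simp only [resFfun]
    norm_num
    exact Quotient.sound <| Equiv.Perm.SameCycle.symm
      (show M.φ.SameCycle (M.α d) (M.σ d) from
        ⟨1, by simp [φ, Equiv.Perm.mul_apply, M.α_invol]⟩)
  · show M.resFfun (M.res.φ (d, 2)) = M.resFfun (d, 2)
    rw [res_φ_two]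
    show Sum.inr (Quotient.mk (permSetoid M.σ) (M.σ.symm d)) =
      Sum.inr (Quotient.mk (permSetoid M.σ) d)
    exact congrArg Sum.inr
      (quot_eq_of_sameCycle M.σ (⟨1, by simp⟩ : M.σ.SameCycle (M.σ.symm d) d))

lemma resF_back0_const : ∀ d : M.D,
    Quotient.mk (permSetoid M.res.φ) (M.φ d, (0 : Fin 3)) =
      Quotient.mk (permSetoid M.res.φ) (d, (0 : Fin 3)) :=
  fun d => (quot_eq_of_sameCycle M.res.φ (M.res_φ_sc0 d)).symm

lemma resF_back2_const : ∀ d : M.D,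
    Quotient.mk (permSetoid M.res.φ) (M.σ d, (2 : Fin 3)) =
      Quotient.mk (permSetoid M.res.φ) (d, (2 : Fin 3)) :=
  fun d => quot_eq_of_sameCycle M.res.φ
    (⟨1, by simp; rfl⟩ : M.res.φ.SameCycle (M.σ d, 2) (d, 2))

/-- Faces of the resolution: original faces plus one small face per vertex. -/
noncomputable def resFEquiv :
    Quotient (permSetoid M.res.φ) ≃
      (Quotient (permSetoid M.φ)) ⊕ (Quotient (permSetoid M.σ)) where
  toFun := Quotient.lift M.resFfun
    (fun _ _ h => sameCycle_const M.res.φ M.resFfun M.resFfun_const h)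
  invFun := Sum.elim
    (Quotient.lift (fun d => Quotient.mk (permSetoid M.res.φ) (d, 0))
      (fun _ _ h => sameCycle_const M.φ
        (fun d => Quotient.mk (permSetoid M.res.φ) (d, 0)) M.resF_back0_const h))
    (Quotient.lift (fun d => Quotient.mk (permSetoid M.res.φ) (d, 2))
      (fun _ _ h => sameCycle_const M.σ
        (fun d => Quotient.mk (permSetoid M.res.φ) (d, 2)) M.resF_back2_const h))
  left_inv := by
    refine Quotient.ind ?_
    rintro ⟨d, i⟩
    fin_cases i
    · rfl
    · show Quotient.mk (permSetoid M.res.φ) (M.α d, 0) = _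
      exact quot_eq_of_sameCycle M.res.φ
        (⟨1, by simp [M.α_invol]; rfl⟩ : M.res.φ.SameCycle (M.α d, 0) (d, 1))
    · rfl
  right_inv := by
    rintro (q | q) <;>
      · induction q using Quotient.ind with
        | _ d => rfl

lemma res_planar (hP : M.Planar) : M.res.Planar := by
  refine ⟨M.res_connected hP.1, ?_⟩
  have h1 : numCycles M.res.σ = Nat.card M.D := Nat.card_congr M.resVEquiv
  have h2 : numCycles M.res.α = numCycles M.α + Nat.card M.D := by
    rw [numCycles, Nat.card_congr M.resEEquiv, Nat.card_sum]; rfl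
  have h3 : numCycles M.res.φ = numCycles M.φ + numCycles M.σ := by
    rw [numCycles, Nat.card_congr M.resFEquiv, Nat.card_sum]; rfl
  rw [h1, h2, h3]
  have := hP.2
  omega

end CombMap

end Euler

/-- All bridgeless planar maps are 4-face-colorable if and only if all
bridgeless planar cubic maps are 4-face-colorable. -/
theorem fourColor_iff_cubic_fourColor :
    (∀ M : CombMap, M.Planar → M.Bridgeless → M.FourColorable) ↔
    (∀ M : CombMap, M.Planar → M.Bridgeless → M.Cubic → M.FourColorable) := by
  constructor
  · exact fun h M hP hB _ => h M hP hB
  · intro h M hP hB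
    obtain ⟨Φ, hΦ1, hΦ2⟩ := h M.res (M.res_planar hP) (M.res_bridgeless hB) M.res_cubic
    refine ⟨fun d => Φ (d, 0), fun d => ?_, fun d => ?_⟩
    · show Φ (M.φ d, 0) = Φ (d, 0)
      have e1 : M.res.φ (d, 0) = (M.α d, 1) := CombMap.res_φ_zero M d
      have e2 : M.res.φ (M.α d, 1) = (M.φ d, 0) := by rw [CombMap.res_φ_one]; rfl
      have h1 := hΦ1 (M.α d, 1); have h2 := hΦ1 (d, 0)
      rw [e2] at h1; rw [e1] at h2; exact h1.trans h2
    · show Φ (d, 0) ≠ Φ (M.α d, 0)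
      have := hΦ2 (d, 0)
      rwa [CombMap.res_α_zero] at this
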